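/- Let G_1 and G_2 be graphs, let P_1 ∈ V(G_1) and P_2 ∈ V(G_2), let G be the vertex gluing of G_1 and G_2 at P_1 and P_2, and let P ∈ V(G) be the identified vertex. For all n, k ∈ ℕ, the following are equivalent: (1) |nP − E| ≠ ∅ for every effective divisor E on G of degree k; (2) n ≥ λ_{P_1}^{G_1}(k_1) + λ_{P_2}^{G_2}(k_2) for all k_1, k_2 ∈ ℕ with k_1 + k_2 = k, where λ_Q(k) = min{ m ∈ ℕ : r(mQ) = k }. -/
import Mathlib


open scoped Classical

/-- A graph: a finite connected multigraph with no loop edges, given by a symmetric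
edge-multiplicity function on a finite nonempty vertex type. -/
structure Multigraph where
  V : Type
  [fintypeV : Fintype V]
  [decEqV : DecidableEq V]
  [nonemptyV : Nonempty V]
  adj : V → V → ℕ
  adj_symm : ∀ u v, adj u v = adj v u
  adj_loopless : ∀ v, adj v v = 0
  conn : ∀ u v, Relation.ReflTransGen (fun a b => adj a b ≠ 0) u v

attribute [instance] Multigraph.fintypeV Multigraph.decEqV Multigraph.nonemptyV

namespace Multigraph

variable (G : Multigraph)

/-- A simple graph: no multiple edges and more than one vertex. -/
def Simple : Prop :=
  (∀ u v, G.adj u v ≤ 1) ∧ 1 < Fintype.card G.V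

/-- The degree of a divisor. -/
def deg (D : G.V → ℤ) : ℤ := ∑ v, D v

/-- A divisor is effective if all its coefficients are nonnegative. -/
def Effective (D : G.V → ℤ) : Prop := ∀ v, 0 ≤ D v

/-- The Laplacian of an integer-valued function on the vertices. -/
def lap (f : G.V → ℤ) : G.V → ℤ := fun v => ∑ w, (G.adj v w : ℤ) * (f v - f w)

/-- The linear system `|D|` is nonempty, i.e. `D` is linearly equivalent to an
effective divisor. -/
def LinNonempty (D : G.V → ℤ) : Prop :=
  ∃ f : G.V → ℤ, G.Effective (D - G.lap f)

/-- The Baker–Norine rank of a divisor: `-1` if `|D| = ∅`, otherwise the maximal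
`k` such that `|D - E| ≠ ∅` for every effective divisor `E` of degree `k`. -/
noncomputable def rank (D : G.V → ℤ) : ℤ :=
  if G.LinNonempty D then
    ((sSup {k : ℕ | ∀ E : G.V → ℤ, G.Effective E → G.deg E = (k : ℤ) →
        G.LinNonempty (D - E)} : ℕ) : ℤ)
  else -1

/-- The divisor `n • P`. -/
def pt (P : G.V) (n : ℤ) : G.V → ℤ := fun v => if v = P then n else 0

/-- The rank Weierstrass set of `G` at `P`. -/
def Hr (P : G.V) : Set ℕ :=
  {n : ℕ | G.rank (G.pt P ((n : ℤ) - 1)) < G.rank (G.pt P (n : ℤ))}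

/-- The functional Weierstrass set of `G` at `P`: pole orders at `P` of functions
with a unique pole at `P`. -/
def Hf (P : G.V) : Set ℕ :=
  {n : ℕ | ∃ f : G.V → ℤ, G.lap f P = -(n : ℤ) ∧ ∀ Q, Q ≠ P → 0 ≤ G.lap f Q}

/-- The number of edges joining `Q` to vertices outside `A`. -/
def outdeg (A : Finset G.V) (Q : G.V) : ℕ := ∑ R ∈ Aᶜ, G.adj Q R

/-- A divisor is `P`-reduced. -/
def Reduced (P : G.V) (D : G.V → ℤ) : Prop :=
  (∀ Q, Q ≠ P → 0 ≤ D Q) ∧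
  ∀ A : Finset G.V, A.Nonempty → P ∉ A → ∃ Q ∈ A, D Q < (G.outdeg A Q : ℤ)

/-- `G` is the graph `B_n` with two vertices joined by `n` parallel edges. -/
def IsBanana (n : ℕ) : Prop :=
  Fintype.card G.V = 2 ∧ ∀ u v, u ≠ v → G.adj u v = n

/-- `G` is the complete graph on `n` vertices. -/
def IsComplete (n : ℕ) : Prop :=
  Fintype.card G.V = n ∧ ∀ u v, u ≠ v → G.adj u v = 1

/-- `G` is the complete bipartite graph with parts `A` (of size `m`) and its
complement (of size `n`). -/
def IsCompleteBipartite (A : Finset G.V) (m n : ℕ) : Prop :=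
  A.card = m ∧ Aᶜ.card = n ∧
  ∀ u v, G.adj u v = if (u ∈ A ∧ v ∉ A) ∨ (u ∉ A ∧ v ∈ A) then 1 else 0

/-- `λ_Q(k)`: the least `n` with `r(nQ) = k`. -/
noncomputable def lam (Q : G.V) (k : ℕ) : ℕ :=
  sInf {n : ℕ | G.rank (G.pt Q (n : ℤ)) = (k : ℤ)}

end Multigraph

/-- `G` is the vertex gluing of `G₁` and `G₂` identifying `P₁` and `P₂` into `P`. -/
def IsVertexGluing (G G₁ G₂ : Multigraph) (P : G.V) (P₁ : G₁.V) (P₂ : G₂.V) : Prop :=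
  ∃ (ι₁ : G₁.V → G.V) (ι₂ : G₂.V → G.V),
    Function.Injective ι₁ ∧ Function.Injective ι₂ ∧
    ι₁ P₁ = P ∧ ι₂ P₂ = P ∧
    (∀ a b, ι₁ a = ι₂ b → ι₁ a = P) ∧
    (∀ v : G.V, (∃ a, ι₁ a = v) ∨ (∃ b, ι₂ b = v)) ∧
    (∀ a b, G.adj (ι₁ a) (ι₁ b) = G₁.adj a b) ∧
    (∀ a b, G.adj (ι₂ a) (ι₂ b) = G₂.adj a b) ∧
    (∀ a b, ι₁ a ≠ P → ι₂ b ≠ P → G.adj (ι₁ a) (ι₂ b) = 0)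
namespace Multigraph

variable (G : Multigraph)

lemma effective_deg_nonneg {D : G.V → ℤ} (h : G.Effective D) : 0 ≤ G.deg D :=
  Finset.sum_nonneg fun v _ => h v

lemma lap_zero : G.lap (0 : G.V → ℤ) = 0 := by
  funext v; simp [lap]

lemma lap_add (f g : G.V → ℤ) : G.lap (f + g) = G.lap f + G.lap g := by
  funext v
  simp only [lap, Pi.add_apply, ← Finset.sum_add_distrib]
  exact Finset.sum_congr rfl fun w _ => by ring

lemma lap_add_const (f : G.V → ℤ) (c : ℤ) :
    G.lap (fun v => f v + c) = G.lap f := by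
  funext v
  exact Finset.sum_congr rfl fun w _ => by ring

lemma deg_lap (f : G.V → ℤ) : G.deg (G.lap f) = 0 := by
  unfold deg lap
  have h1 : ∀ v w : G.V, (G.adj v w : ℤ) * (f v - f w)
      = (G.adj v w : ℤ) * f v - (G.adj w v : ℤ) * f w := by
    intro v w; rw [G.adj_symm w v]; ring
  simp_rw [h1, Finset.sum_sub_distrib]
  rw [Finset.sum_comm (f := fun v w => (G.adj w v : ℤ) * f w)]
  exact sub_self _

lemma linNonempty_mono {D D' : G.V → ℤ} (h : ∀ v, D v ≤ D' v) :
    G.LinNonempty D → G.LinNonempty D' := by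
  rintro ⟨f, hf⟩
  exact ⟨f, fun v => le_trans (hf v) (by simpa using sub_le_sub_right (h v) (G.lap f v))⟩

lemma linNonempty_add {D D' : G.V → ℤ} (h : G.LinNonempty D) (h' : G.LinNonempty D') :
    G.LinNonempty (D + D') := by
  obtain ⟨f, hf⟩ := h; obtain ⟨g, hg⟩ := h'
  refine ⟨f + g, fun v => ?_⟩
  have h1 := hf v; have h2 := hg v
  simp only [Pi.sub_apply, Pi.add_apply, lap_add] at *
  linarith

lemma linNonempty_zero : G.LinNonempty 0 :=
  ⟨0, fun v => by simp [lap_zero]⟩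

lemma linNonempty_nsmul (c : ℕ) {D : G.V → ℤ} (h : G.LinNonempty D) :
    G.LinNonempty (c • D) := by
  induction c with
  | zero => simpa using G.linNonempty_zero
  | succ c ih => rw [succ_nsmul]; exact G.linNonempty_add ih h

lemma deg_sub (D D' : G.V → ℤ) : G.deg (D - D') = G.deg D - G.deg D' := by
  unfold deg; rw [← Finset.sum_sub_distrib]; rfl

lemma not_linNonempty_of_deg_neg {D : G.V → ℤ} (h : G.deg D < 0) : ¬ G.LinNonempty D := by
  rintro ⟨f, hf⟩
  have h1 := G.effective_deg_nonneg hf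
  rw [G.deg_sub, G.deg_lap, sub_zero] at h1
  omega

lemma deg_pt (Q : G.V) (x : ℤ) : G.deg (G.pt Q x) = x := by
  simp [deg, pt]

lemma pt_self (Q : G.V) (x : ℤ) : G.pt Q x Q = x := if_pos rfl

lemma pt_ne (Q : G.V) (x : ℤ) {v : G.V} (h : v ≠ Q) : G.pt Q x v = 0 := if_neg h

lemma pt_effective (Q : G.V) (n : ℕ) : G.Effective (G.pt Q (n : ℤ)) := by
  intro v; unfold pt; split <;> simp

lemma linNonempty_pt (Q : G.V) (n : ℕ) : G.LinNonempty (G.pt Q (n : ℤ)) :=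
  ⟨0, fun v => by simpa [lap_zero] using G.pt_effective Q n v⟩

lemma eff_deg_zero {E : G.V → ℤ} (hE : G.Effective E) (h : G.deg E = 0) : E = 0 := by
  funext v
  have := (Finset.sum_eq_zero_iff_of_nonneg (fun v _ => hE v)).mp h v (Finset.mem_univ v)
  simpa using this

end Multigraph
namespace Multigraph

variable (G : Multigraph)

lemma exists_step {u v : G.V} (h : G.adj u v ≠ 0) :
    ∃ c : ℕ, G.LinNonempty (G.pt u (c : ℤ) - G.pt v 1) := by
  have huv : u ≠ v := by
    rintro rfl; exact h (G.adj_loopless u)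
  refine ⟨∑ w, G.adj u w, ?_⟩
  refine ⟨fun w => if w = u then 1 else 0, fun w => ?_⟩
  have hlap : ∀ w : G.V, G.lap (fun w => if w = u then (1:ℤ) else 0) w
      = if w = u then (∑ w', (G.adj u w' : ℤ)) else -(G.adj w u : ℤ) := by
    intro w
    unfold lap
    by_cases hw : w = u
    · subst hw
      simp only [if_pos rfl, mul_sub, mul_one, mul_ite, mul_zero,
        Finset.sum_sub_distrib, Finset.sum_ite_eq', Finset.mem_univ, if_true]
      simp [G.adj_loopless]
    · simp only [if_neg hw, zero_sub, mul_neg, mul_ite, mul_one, mul_zero,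
        Finset.sum_neg_distrib, Finset.sum_ite_eq', Finset.mem_univ, if_true]
  simp only [Pi.sub_apply, hlap, pt]
  by_cases hw : w = u
  · subst hw
    rw [if_pos rfl, if_neg huv, if_pos rfl]
    push_cast; simp
  · rw [if_neg hw, if_neg hw]
    have hnn : (0:ℤ) ≤ (G.adj w u : ℤ) := by positivity
    by_cases hwv : w = v
    · subst hwv
      rw [if_pos rfl]
      have : (1:ℤ) ≤ (G.adj w u : ℤ) := by
        rw [G.adj_symm w u]
        exact_mod_cast Nat.one_le_iff_ne_zero.mpr h
      linarith
    · rw [if_neg hwv]; linarith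

lemma exists_pt_sub_pt (u v : G.V) :
    ∃ c : ℕ, G.LinNonempty (G.pt u (c : ℤ) - G.pt v 1) := by
  induction (G.conn u v) with
  | refl =>
      refine ⟨1, ?_⟩
      simp only [Nat.cast_one, sub_self]
      exact G.linNonempty_zero
  | tail hub hstep ih =>
      rename_i b w
      obtain ⟨c₁, h₁⟩ := ih
      obtain ⟨c₂, h₂⟩ := G.exists_step hstep
      refine ⟨c₂ * c₁, ?_⟩
      have hsum := G.linNonempty_add (G.linNonempty_nsmul c₂ h₁) h₂
      have heq : c₂ • (G.pt u (c₁:ℤ) - G.pt b 1) + (G.pt b (c₂:ℤ) - G.pt w 1)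
          = G.pt u ((c₂ * c₁ : ℕ) : ℤ) - G.pt w 1 := by
        funext x
        simp only [Pi.add_apply, Pi.sub_apply, Pi.smul_apply, smul_eq_mul, pt]
        push_cast
        split_ifs <;> ring
      rwa [heq] at hsum

end Multigraph
namespace Multigraph

variable (G : Multigraph)

/-- The set of `n` such that `|nQ - E|` is nonempty for all effective `E` of degree `k`. -/
def NN (Q : G.V) (k : ℕ) : Set ℕ :=
  {n : ℕ | ∀ E : G.V → ℤ, G.Effective E → G.deg E = (k : ℤ) →
      G.LinNonempty (G.pt Q (n : ℤ) - E)}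

lemma deg_add (D D' : G.V → ℤ) : G.deg (D + D') = G.deg D + G.deg D' := by
  unfold deg
  simp only [Pi.add_apply]
  rw [Finset.sum_add_distrib]

lemma NN_upward {Q : G.V} {k n n' : ℕ} (h : n ∈ G.NN Q k) (hle : n ≤ n') :
    n' ∈ G.NN Q k := by
  intro E hE hdeg
  refine G.linNonempty_mono (D := G.pt Q (n:ℤ) - E) (fun v => ?_) (h E hE hdeg)
  simp only [Pi.sub_apply, pt]
  split
  · exact sub_le_sub_right (by exact_mod_cast hle) _
  · exact le_rfl

lemma NN_nonempty (Q : G.V) (k : ℕ) : ∃ n, n ∈ G.NN Q k := by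
  induction k with
  | zero =>
      refine ⟨0, fun E hE hdeg => ?_⟩
      have hE0 : E = 0 := G.eff_deg_zero hE (by exact_mod_cast hdeg)
      subst hE0
      simpa using G.linNonempty_pt Q 0
  | succ k ih =>
      obtain ⟨nk, hnk⟩ := ih
      have hc := fun R => G.exists_pt_sub_pt Q R
      choose c hc using hc
      refine ⟨nk + Finset.univ.sup c, fun E hE hdeg => ?_⟩
      -- find a vertex with positive coefficient
      have hex : ∃ R, 1 ≤ E R := by
        by_contra hno
        push_neg at hno
        have : ∀ v, E v = 0 := fun v => le_antisymm (by have := hno v; omega) (hE v)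
        have : G.deg E = 0 := by unfold deg; simp [this]
        rw [hdeg] at this; exact_mod_cast absurd this (by exact_mod_cast Nat.succ_ne_zero k)
      obtain ⟨R, hR⟩ := hex
      set E' : G.V → ℤ := E - G.pt R 1 with hE'
      have hE'eff : G.Effective E' := by
        intro v
        simp only [hE', Pi.sub_apply, pt]
        split
        · rename_i hv; subst hv; omega
        · have := hE v; omega
      have hE'deg : G.deg E' = (k : ℤ) := by
        rw [hE', G.deg_sub, hdeg, G.deg_pt]; push_cast; ring
      have h1 := hnk E' hE'eff hE'deg
      have h2 := hc R
      have h3 := G.linNonempty_add h1 h2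
      refine G.linNonempty_mono (fun v => ?_) h3
      simp only [Pi.add_apply, Pi.sub_apply, pt, hE']
      have hcle : (c R : ℤ) ≤ ((Finset.univ.sup c : ℕ) : ℤ) :=
        by exact_mod_cast Finset.le_sup (f := c) (Finset.mem_univ R)
      push_cast
      split_ifs <;> simp_all <;> linarith

/-- membership in `NN` is equivalent to a rank inequality. -/
lemma rank_pt_eq (Q : G.V) (n : ℕ) :
    G.rank (G.pt Q (n : ℤ)) = ((sSup {j : ℕ | n ∈ G.NN Q j} : ℕ) : ℤ) := by
  unfold rank
  rw [if_pos (G.linNonempty_pt Q n)]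
  rfl

lemma S_bddAbove (Q : G.V) (n : ℕ) : ∀ j ∈ {j : ℕ | n ∈ G.NN Q j}, j ≤ n := by
  intro j hj
  by_contra hlt
  push_neg at hlt
  have := hj (G.pt Q (j:ℤ)) (G.pt_effective Q j) (G.deg_pt Q j)
  have heq : G.pt Q (n:ℤ) - G.pt Q (j:ℤ) = G.pt Q ((n:ℤ) - j) := by
    funext v; simp only [Pi.sub_apply, pt]; split <;> simp
  rw [heq] at this
  exact G.not_linNonempty_of_deg_neg (by rw [G.deg_pt]; omega) this

lemma S_zero_mem (Q : G.V) (n : ℕ) : n ∈ G.NN Q 0 := by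
  intro E hE hdeg
  have hE0 : E = 0 := G.eff_deg_zero hE (by exact_mod_cast hdeg)
  subst hE0
  simpa using G.linNonempty_pt Q n

lemma S_down (Q : G.V) (n : ℕ) {j : ℕ} (h : n ∈ G.NN Q (j + 1)) : n ∈ G.NN Q j := by
  intro E hE hdeg
  have h1 := h (E + G.pt Q 1) (fun v => by
      simp only [Pi.add_apply, pt]; have := hE v; split <;> omega)
    (by rw [G.deg_add, hdeg, G.deg_pt]; push_cast; ring)
  refine G.linNonempty_mono (fun v => ?_) h1
  simp only [Pi.sub_apply, Pi.add_apply, pt]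
  split <;> omega

lemma S_down_le (Q : G.V) (n : ℕ) {i j : ℕ} (hij : i ≤ j) (h : n ∈ G.NN Q j) :
    n ∈ G.NN Q i := by
  obtain ⟨d, rfl⟩ := Nat.exists_eq_add_of_le hij
  induction d with
  | zero => simpa using h
  | succ d ih => exact ih (Nat.le_add_right _ _) (G.S_down Q n (by rwa [← Nat.add_assoc] at h))

lemma mem_NN_iff_rank (Q : G.V) (n k : ℕ) :
    n ∈ G.NN Q k ↔ (k : ℤ) ≤ G.rank (G.pt Q (n : ℤ)) := by
  rw [G.rank_pt_eq, Nat.cast_le]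
  constructor
  · intro h
    exact le_csSup ⟨n, G.S_bddAbove Q n⟩ h
  · intro h
    have hmem : sSup {j : ℕ | n ∈ G.NN Q j} ∈ {j : ℕ | n ∈ G.NN Q j} :=
      Nat.sSup_mem ⟨0, G.S_zero_mem Q n⟩ ⟨n, G.S_bddAbove Q n⟩
    exact G.S_down_le Q n h hmem

lemma rank_step (Q : G.V) (n : ℕ) :
    G.rank (G.pt Q ((n + 1 : ℕ) : ℤ)) ≤ G.rank (G.pt Q (n : ℤ)) + 1 := by
  rw [G.rank_pt_eq, G.rank_pt_eq]
  have h : sSup {j : ℕ | n + 1 ∈ G.NN Q j} ≤ sSup {j : ℕ | n ∈ G.NN Q j} + 1 := by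
    refine csSup_le ⟨0, G.S_zero_mem Q (n+1)⟩ (fun j hj => ?_)
    match j with
    | 0 => omega
    | j + 1 =>
      have hj' : n ∈ G.NN Q j := by
        intro E hE hdeg
        have h1 := hj (E + G.pt Q 1) (fun v => by
            simp only [Pi.add_apply, pt]; have := hE v; split <;> omega)
          (by rw [G.deg_add, hdeg, G.deg_pt]; push_cast; ring)
        refine G.linNonempty_mono (fun v => ?_) h1
        simp only [Pi.sub_apply, Pi.add_apply, pt]
        split <;> [skip; omega]
        push_cast; omega
      have := le_csSup ⟨n, G.S_bddAbove Q n⟩ hj'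
      omega
  exact_mod_cast h

lemma mem_NN_iff_lam_le (Q : G.V) (k n : ℕ) :
    n ∈ G.NN Q k ↔ G.lam Q k ≤ n := by
  obtain ⟨n₀, hn₀⟩ := G.NN_nonempty Q k
  set m := sInf (G.NN Q k) with hm
  have hmmem : m ∈ G.NN Q k := Nat.sInf_mem ⟨n₀, hn₀⟩
  have hrank_ge : (k : ℤ) ≤ G.rank (G.pt Q (m : ℤ)) := (G.mem_NN_iff_rank Q m k).mp hmmem
  have hrank_eq : G.rank (G.pt Q (m : ℤ)) = (k : ℤ) := by
    refine le_antisymm ?_ hrank_ge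
    match hm' : m with
    | 0 =>
        rw [G.rank_pt_eq]
        have : sSup {j : ℕ | (0:ℕ) ∈ G.NN Q j} ≤ 0 :=
          csSup_le ⟨0, G.S_zero_mem Q 0⟩ (G.S_bddAbove Q 0)
        have hk0 : (0 : ℤ) ≤ (k:ℤ) := by positivity
        omega
    | m' + 1 =>
        have hm'notin : m' ∉ G.NN Q k := Nat.notMem_of_lt_sInf (by omega)
        have h1 : ¬ ((k : ℤ) ≤ G.rank (G.pt Q (m' : ℤ))) :=
          fun hc => hm'notin ((G.mem_NN_iff_rank Q m' k).mpr hc)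
        have h2 := G.rank_step Q m'
        omega
  have hlam : G.lam Q k = m := by
    unfold lam
    have hmT : m ∈ {n : ℕ | G.rank (G.pt Q (n : ℤ)) = (k : ℤ)} := hrank_eq
    refine le_antisymm (Nat.sInf_le hmT) ?_
    have hT : sInf {n : ℕ | G.rank (G.pt Q (n : ℤ)) = (k : ℤ)}
        ∈ {n : ℕ | G.rank (G.pt Q (n : ℤ)) = (k : ℤ)} := Nat.sInf_mem ⟨m, hmT⟩
    have : sInf {n : ℕ | G.rank (G.pt Q (n : ℤ)) = (k : ℤ)} ∈ G.NN Q k :=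
      (G.mem_NN_iff_rank Q _ k).mpr (le_of_eq hT.symm)
    exact Nat.sInf_le this
  rw [hlam]
  exact ⟨fun h => Nat.sInf_le h, fun h => G.NN_upward hmmem h⟩

end Multigraph
section Gluing

variable {G G₁ G₂ : Multigraph} {P : G.V} {P₁ : G₁.V} {P₂ : G₂.V}
  {ι₁ : G₁.V → G.V} {ι₂ : G₂.V → G.V}

lemma glue_sum_split (inj1 : Function.Injective ι₁) (inj2 : Function.Injective ι₂)
    (hP1 : ι₁ P₁ = P) (hP2 : ι₂ P₂ = P)
    (hcap : ∀ a b, ι₁ a = ι₂ b → ι₁ a = P)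
    (hcup : ∀ v : G.V, (∃ a, ι₁ a = v) ∨ (∃ b, ι₂ b = v))
    (g : G.V → ℤ) :
    ∑ v, g v = (∑ a, g (ι₁ a)) + ((∑ b, g (ι₂ b)) - g (ι₂ P₂)) := by
  classical
  have hU : (Finset.univ : Finset G.V)
      = Finset.univ.image ι₁ ∪ (Finset.univ.image ι₂ \ {P}) := by
    ext v
    simp only [Finset.mem_univ, true_iff, Finset.mem_union, Finset.mem_image,
      Finset.mem_sdiff, Finset.mem_singleton, true_and]
    rcases hcup v with ⟨a, rfl⟩ | ⟨b, rfl⟩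
    · exact Or.inl ⟨a, rfl⟩
    · by_cases hb : ι₂ b = P
      · exact Or.inl ⟨P₁, hP1.trans hb.symm⟩
      · exact Or.inr ⟨⟨b, rfl⟩, hb⟩
  have hdisj : Disjoint (Finset.univ.image ι₁) (Finset.univ.image ι₂ \ {P}) := by
    rw [Finset.disjoint_left]
    rintro v hv1 hv2
    obtain ⟨a, -, rfl⟩ := Finset.mem_image.mp hv1
    obtain ⟨hv2', hvP⟩ := Finset.mem_sdiff.mp hv2
    obtain ⟨b, -, hb⟩ := Finset.mem_image.mp hv2'
    exact hvP (Finset.mem_singleton.mpr (hcap a b hb.symm))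
  calc ∑ v, g v = ∑ v ∈ Finset.univ.image ι₁ ∪ (Finset.univ.image ι₂ \ {P}), g v := by
        rw [← hU]
    _ = (∑ v ∈ Finset.univ.image ι₁, g v) + ∑ v ∈ Finset.univ.image ι₂ \ {P}, g v :=
        Finset.sum_union hdisj
    _ = (∑ a, g (ι₁ a)) + ((∑ b, g (ι₂ b)) - g (ι₂ P₂)) := by
        congr 1
        · exact Finset.sum_image (fun a _ b _ h' => inj1 h')
        · rw [Finset.sum_sdiff_eq_sub (by
            intro x hx
            rw [Finset.mem_singleton] at hx
            subst hx
            exact Finset.mem_image.mpr ⟨P₂, Finset.mem_univ P₂, hP2⟩)]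
          rw [Finset.sum_image (fun a _ b _ h' => inj2 h'), Finset.sum_singleton, hP2]

lemma glue_lap₁ (inj1 : Function.Injective ι₁) (inj2 : Function.Injective ι₂)
    (hP1 : ι₁ P₁ = P) (hP2 : ι₂ P₂ = P)
    (hcap : ∀ a b, ι₁ a = ι₂ b → ι₁ a = P)
    (hcup : ∀ v : G.V, (∃ a, ι₁ a = v) ∨ (∃ b, ι₂ b = v))
    (hA1 : ∀ a b, G.adj (ι₁ a) (ι₁ b) = G₁.adj a b)
    (hA12 : ∀ a b, ι₁ a ≠ P → ι₂ b ≠ P → G.adj (ι₁ a) (ι₂ b) = 0)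
    (f : G.V → ℤ) {a : G₁.V} (ha : a ≠ P₁) :
    G.lap f (ι₁ a) = G₁.lap (f ∘ ι₁) a := by
  have hne1 : ι₁ a ≠ P := fun hc => ha (inj1 (hc.trans hP1.symm))
  show ∑ v, (G.adj (ι₁ a) v : ℤ) * (f (ι₁ a) - f v) = _
  rw [glue_sum_split inj1 inj2 hP1 hP2 hcap hcup]
  have h2 : (∑ b, (G.adj (ι₁ a) (ι₂ b) : ℤ) * (f (ι₁ a) - f (ι₂ b)))
      = (G.adj (ι₁ a) (ι₂ P₂) : ℤ) * (f (ι₁ a) - f (ι₂ P₂)) := by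
    refine Finset.sum_eq_single P₂ (fun b _ hb => ?_) (by simp)
    have hbP : ι₂ b ≠ P := fun hc => hb (inj2 (hc.trans hP2.symm))
    rw [hA12 a b hne1 hbP]
    simp
  rw [h2, sub_self, add_zero]
  exact Finset.sum_congr rfl fun a' _ => by rw [hA1]; rfl

lemma glue_lap₂ (inj1 : Function.Injective ι₁) (inj2 : Function.Injective ι₂)
    (hP1 : ι₁ P₁ = P) (hP2 : ι₂ P₂ = P)
    (hcap : ∀ a b, ι₁ a = ι₂ b → ι₁ a = P)
    (hcup : ∀ v : G.V, (∃ a, ι₁ a = v) ∨ (∃ b, ι₂ b = v))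
    (hA2 : ∀ a b, G.adj (ι₂ a) (ι₂ b) = G₂.adj a b)
    (hA12 : ∀ a b, ι₁ a ≠ P → ι₂ b ≠ P → G.adj (ι₁ a) (ι₂ b) = 0)
    (f : G.V → ℤ) {b : G₂.V} (hb : b ≠ P₂) :
    G.lap f (ι₂ b) = G₂.lap (f ∘ ι₂) b := by
  have hne2 : ι₂ b ≠ P := fun hc => hb (inj2 (hc.trans hP2.symm))
  show ∑ v, (G.adj (ι₂ b) v : ℤ) * (f (ι₂ b) - f v) = _
  rw [glue_sum_split inj1 inj2 hP1 hP2 hcap hcup]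
  have h1 : (∑ a', (G.adj (ι₂ b) (ι₁ a') : ℤ) * (f (ι₂ b) - f (ι₁ a')))
      = (G.adj (ι₂ b) (ι₁ P₁) : ℤ) * (f (ι₂ b) - f (ι₁ P₁)) := by
    refine Finset.sum_eq_single P₁ (fun a' _ ha' => ?_) (by simp)
    have haP : ι₁ a' ≠ P := fun hc => ha' (inj1 (hc.trans hP1.symm))
    rw [G.adj_symm, hA12 a' b haP hne2]
    simp
  rw [h1]
  have hPP : ι₁ P₁ = ι₂ P₂ := hP1.trans hP2.symm
  rw [hPP]
  have h3 : (∑ b', (G.adj (ι₂ b) (ι₂ b') : ℤ) * (f (ι₂ b) - f (ι₂ b')))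
      = G₂.lap (f ∘ ι₂) b :=
    Finset.sum_congr rfl fun b' _ => by rw [hA2]; rfl
  rw [h3]; ring

lemma glue_lap_P (inj1 : Function.Injective ι₁) (inj2 : Function.Injective ι₂)
    (hP1 : ι₁ P₁ = P) (hP2 : ι₂ P₂ = P)
    (hcap : ∀ a b, ι₁ a = ι₂ b → ι₁ a = P)
    (hcup : ∀ v : G.V, (∃ a, ι₁ a = v) ∨ (∃ b, ι₂ b = v))
    (hA1 : ∀ a b, G.adj (ι₁ a) (ι₁ b) = G₁.adj a b)
    (hA2 : ∀ a b, G.adj (ι₂ a) (ι₂ b) = G₂.adj a b)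
    (f : G.V → ℤ) :
    G.lap f P = G₁.lap (f ∘ ι₁) P₁ + G₂.lap (f ∘ ι₂) P₂ := by
  show ∑ v, (G.adj P v : ℤ) * (f P - f v) = _
  rw [glue_sum_split inj1 inj2 hP1 hP2 hcap hcup]
  have h1 : (∑ a', (G.adj P (ι₁ a') : ℤ) * (f P - f (ι₁ a')))
      = G₁.lap (f ∘ ι₁) P₁ := by
    refine Finset.sum_congr rfl fun a' _ => ?_
    rw [← hP1, hA1]; rfl
  have h2 : (∑ b', (G.adj P (ι₂ b') : ℤ) * (f P - f (ι₂ b')))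
      = G₂.lap (f ∘ ι₂) P₂ := by
    refine Finset.sum_congr rfl fun b' _ => ?_
    rw [← hP2, hA2]; rfl
  rw [h1, h2, ← hP2]
  simp

end Gluing

/-- In a vertex gluing, `|nP - E| ≠ ∅` for every effective divisor `E` of degree
`k` iff `n ≥ λ_{P₁}(k₁) + λ_{P₂}(k₂)` for all decompositions `k₁ + k₂ = k`. -/
theorem linNonempty_iff_lam (G G₁ G₂ : Multigraph) (P : G.V) (P₁ : G₁.V) (P₂ : G₂.V)
    (h : IsVertexGluing G G₁ G₂ P P₁ P₂) (n k : ℕ) :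
    (∀ E : G.V → ℤ, G.Effective E → G.deg E = (k : ℤ) →
        G.LinNonempty (G.pt P (n : ℤ) - E)) ↔
      (∀ k₁ k₂ : ℕ, k₁ + k₂ = k → G₁.lam P₁ k₁ + G₂.lam P₂ k₂ ≤ n) := by
  obtain ⟨ι₁, ι₂, inj1, inj2, hP1, hP2, hcap, hcup, hA1, hA2, hA12⟩ := h
  have hne1 : ∀ a : G₁.V, a ≠ P₁ → ι₁ a ≠ P :=
    fun a ha hc => ha (inj1 (hc.trans hP1.symm))
  have hne2 : ∀ b : G₂.V, b ≠ P₂ → ι₂ b ≠ P :=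
    fun b hb hc => hb (inj2 (hc.trans hP2.symm))
  constructor
  · -- forward direction
    intro hN k₁ k₂ hk
    -- construct witnesses E1, E2
    have hw1 : ∃ E1 : G₁.V → ℤ, G₁.Effective E1 ∧ G₁.deg E1 = (k₁:ℤ) ∧
        ∀ m' : ℕ, G₁.lam P₁ k₁ = m' + 1 →
          ¬ G₁.LinNonempty (G₁.pt P₁ (m':ℤ) - E1) := by
      rcases Nat.eq_zero_or_pos (G₁.lam P₁ k₁) with h0 | hpos
      · exact ⟨G₁.pt P₁ (k₁:ℤ), G₁.pt_effective P₁ k₁, G₁.deg_pt P₁ (k₁:ℤ),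
          fun m' hm' => by omega⟩
      · set m' := G₁.lam P₁ k₁ - 1 with hm'
        have hnotin : m' ∉ G₁.NN P₁ k₁ := fun hc => by
          have := (G₁.mem_NN_iff_lam_le P₁ k₁ m').mp hc; omega
        rw [Multigraph.NN, Set.mem_setOf_eq] at hnotin
        push_neg at hnotin
        obtain ⟨E1, hEff, hdeg, hnl⟩ := hnotin
        exact ⟨E1, hEff, hdeg, fun m'' hm'' => by
          have : m'' = m' := by omega
          subst this; exact hnl⟩
    have hw2 : ∃ E2 : G₂.V → ℤ, G₂.Effective E2 ∧ G₂.deg E2 = (k₂:ℤ) ∧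
        ∀ m' : ℕ, G₂.lam P₂ k₂ = m' + 1 →
          ¬ G₂.LinNonempty (G₂.pt P₂ (m':ℤ) - E2) := by
      rcases Nat.eq_zero_or_pos (G₂.lam P₂ k₂) with h0 | hpos
      · exact ⟨G₂.pt P₂ (k₂:ℤ), G₂.pt_effective P₂ k₂, G₂.deg_pt P₂ (k₂:ℤ),
          fun m' hm' => by omega⟩
      · set m' := G₂.lam P₂ k₂ - 1 with hm'
        have hnotin : m' ∉ G₂.NN P₂ k₂ := fun hc => by
          have := (G₂.mem_NN_iff_lam_le P₂ k₂ m').mp hc; omega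
        rw [Multigraph.NN, Set.mem_setOf_eq] at hnotin
        push_neg at hnotin
        obtain ⟨E2, hEff, hdeg, hnl⟩ := hnotin
        exact ⟨E2, hEff, hdeg, fun m'' hm'' => by
          have : m'' = m' := by omega
          subst this; exact hnl⟩
    obtain ⟨E1, hE1eff, hE1deg, hE1w⟩ := hw1
    obtain ⟨E2, hE2eff, hE2deg, hE2w⟩ := hw2
    set E : G.V → ℤ := fun v =>
      Function.extend ι₁ E1 (fun _ => 0) v + Function.extend ι₂ E2 (fun _ => 0) v
      with hEdef
    have hnr2 : ∀ b : G₂.V, b ≠ P₂ → ¬ ∃ a, ι₁ a = ι₂ b := by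
      rintro b hb ⟨a, ha⟩
      exact hne2 b hb (by rw [← ha]; exact hcap a b ha)
    have hnr1 : ∀ a : G₁.V, a ≠ P₁ → ¬ ∃ b, ι₂ b = ι₁ a := by
      rintro a ha ⟨b, hb⟩
      exact hne1 a ha (hcap a b hb.symm)
    have hEι1 : ∀ a : G₁.V, a ≠ P₁ → E (ι₁ a) = E1 a := by
      intro a ha
      rw [hEdef]
      simp only
      rw [inj1.extend_apply, Function.extend_apply' _ _ _ (hnr1 a ha), add_zero]
    have hEι2 : ∀ b : G₂.V, b ≠ P₂ → E (ι₂ b) = E2 b := by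
      intro b hb
      rw [hEdef]
      simp only
      rw [inj2.extend_apply, Function.extend_apply' _ _ _ (hnr2 b hb), zero_add]
    have hEP : E P = E1 P₁ + E2 P₂ := by
      rw [hEdef]
      simp only
      have e1 : Function.extend ι₁ E1 (fun _ => 0) P = E1 P₁ := by
        rw [← hP1]; exact inj1.extend_apply _ _ _
      have e2 : Function.extend ι₂ E2 (fun _ => 0) P = E2 P₂ := by
        rw [← hP2]; exact inj2.extend_apply _ _ _
      rw [e1, e2]
    have hEeff : G.Effective E := by
      intro v
      rw [hEdef]
      simp only
      have h1 : (0:ℤ) ≤ Function.extend ι₁ E1 (fun _ => 0) v := by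
        rw [Function.extend_def]; split
        · exact hE1eff _
        · exact le_rfl
      have h2 : (0:ℤ) ≤ Function.extend ι₂ E2 (fun _ => 0) v := by
        rw [Function.extend_def]; split
        · exact hE2eff _
        · exact le_rfl
      linarith
    have hEdeg : G.deg E = (k:ℤ) := by
      rw [Multigraph.deg, glue_sum_split inj1 inj2 hP1 hP2 hcap hcup]
      have hp2 : ι₂ P₂ = ι₁ P₁ := hP2.trans hP1.symm
      have hs1 : (∑ a, E (ι₁ a)) = G₁.deg E1 + E2 P₂ := by
        rw [show (∑ a, E (ι₁ a)) = ∑ a, (E1 a + if a = P₁ then E2 P₂ else 0) from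
          Finset.sum_congr rfl fun a _ => by
            by_cases ha : a = P₁
            · subst ha; rw [if_pos rfl, hP1, hEP]
            · rw [hEι1 a ha, if_neg ha, add_zero]]
        rw [Finset.sum_add_distrib, Finset.sum_ite_eq' Finset.univ P₁ (fun _ => E2 P₂)]
        simp [Multigraph.deg]
      have hs2 : (∑ b, E (ι₂ b)) = G₂.deg E2 + E1 P₁ := by
        rw [show (∑ b, E (ι₂ b)) = ∑ b, (E2 b + if b = P₂ then E1 P₁ else 0) from
          Finset.sum_congr rfl fun b _ => by
            by_cases hb : b = P₂
            · subst hb; rw [if_pos rfl, hP2, hEP]; ring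
            · rw [hEι2 b hb, if_neg hb, add_zero]]
        rw [Finset.sum_add_distrib, Finset.sum_ite_eq' Finset.univ P₂ (fun _ => E1 P₁)]
        simp [Multigraph.deg]
      rw [hs1, hs2, hP2, hEP, hE1deg, hE2deg, ← hk]
      push_cast; ring
    obtain ⟨f, hf⟩ := hN E hEeff hEdeg
    set f1 : G₁.V → ℤ := f ∘ ι₁ with hf1def
    set f2 : G₂.V → ℤ := f ∘ ι₂ with hf2def
    set s1 : ℤ := G₁.lap f1 P₁ + E1 P₁ with hs1def
    set s2 : ℤ := G₂.lap f2 P₂ + E2 P₂ with hs2def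
    have hsn : s1 + s2 ≤ (n:ℤ) := by
      have := hf P
      simp only [Pi.sub_apply, Multigraph.pt_self] at this
      rw [glue_lap_P inj1 inj2 hP1 hP2 hcap hcup hA1 hA2, hEP] at this
      rw [hs1def, hs2def, hf1def, hf2def]
      linarith
    have hD1 : G₁.Effective (G₁.pt P₁ s1 - E1 - G₁.lap f1) := by
      intro v
      by_cases hv : v = P₁
      · subst hv
        simp only [Pi.sub_apply, Multigraph.pt_self, hs1def]
        linarith
      · have := hf (ι₁ v)
        simp only [Pi.sub_apply, Multigraph.pt_ne _ _ _ (hne1 v hv)] at this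
        rw [hEι1 v hv, glue_lap₁ inj1 inj2 hP1 hP2 hcap hcup hA1 hA12 f hv] at this
        simp only [Pi.sub_apply, Multigraph.pt_ne _ _ _ hv]
        linarith
    have hD2 : G₂.Effective (G₂.pt P₂ s2 - E2 - G₂.lap f2) := by
      intro v
      by_cases hv : v = P₂
      · subst hv
        simp only [Pi.sub_apply, Multigraph.pt_self, hs2def]
        linarith
      · have := hf (ι₂ v)
        simp only [Pi.sub_apply, Multigraph.pt_ne _ _ _ (hne2 v hv)] at this
        rw [hEι2 v hv, glue_lap₂ inj1 inj2 hP1 hP2 hcap hcup hA2 hA12 f hv] at this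
        simp only [Pi.sub_apply, Multigraph.pt_ne _ _ _ hv]
        linarith
    have hs1k : (k₁:ℤ) ≤ s1 := by
      have := G₁.effective_deg_nonneg hD1
      rw [G₁.deg_sub, G₁.deg_sub, G₁.deg_pt, G₁.deg_lap, hE1deg] at this
      linarith
    have hs2k : (k₂:ℤ) ≤ s2 := by
      have := G₂.effective_deg_nonneg hD2
      rw [G₂.deg_sub, G₂.deg_sub, G₂.deg_pt, G₂.deg_lap, hE2deg] at this
      linarith
    have hm1 : (G₁.lam P₁ k₁ : ℤ) ≤ s1 := by
      rcases Nat.eq_zero_or_pos (G₁.lam P₁ k₁) with h0 | hpos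
      · rw [h0]; push_cast
        have : (0:ℤ) ≤ (k₁:ℤ) := by positivity
        linarith
      · by_contra hc
        push_neg at hc
        set m' := G₁.lam P₁ k₁ - 1 with hm'
        refine hE1w m' (by omega) ?_
        refine G₁.linNonempty_mono (D := G₁.pt P₁ s1 - E1) (fun v => ?_) ⟨f1, ?_⟩
        · simp only [Pi.sub_apply, Multigraph.pt]
          split
          · have : s1 ≤ (m' : ℤ) := by omega
            linarith
          · exact le_rfl
        · intro v
          have := hD1 v
          simp only [Pi.sub_apply] at this ⊢
          linarith
    have hm2 : (G₂.lam P₂ k₂ : ℤ) ≤ s2 := by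
      rcases Nat.eq_zero_or_pos (G₂.lam P₂ k₂) with h0 | hpos
      · rw [h0]; push_cast
        have : (0:ℤ) ≤ (k₂:ℤ) := by positivity
        linarith
      · by_contra hc
        push_neg at hc
        set m' := G₂.lam P₂ k₂ - 1 with hm'
        refine hE2w m' (by omega) ?_
        refine G₂.linNonempty_mono (D := G₂.pt P₂ s2 - E2) (fun v => ?_) ⟨f2, ?_⟩
        · simp only [Pi.sub_apply, Multigraph.pt]
          split
          · have : s2 ≤ (m' : ℤ) := by omega
            linarith
          · exact le_rfl
        · intro v
          have := hD2 v
          simp only [Pi.sub_apply] at this ⊢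
          linarith
    have : (G₁.lam P₁ k₁ : ℤ) + (G₂.lam P₂ k₂ : ℤ) ≤ (n:ℤ) := by linarith
    exact_mod_cast this
  · -- backward direction
    intro hK E hE hdeg
    set E1 : G₁.V → ℤ := fun a => E (ι₁ a) with hE1def
    set E2 : G₂.V → ℤ := fun b => if b = P₂ then 0 else E (ι₂ b) with hE2def
    have hE1eff : G₁.Effective E1 := fun a => hE (ι₁ a)
    have hE2eff : G₂.Effective E2 := by
      intro b
      rw [hE2def]
      simp only
      split
      · exact le_rfl
      · exact hE (ι₂ b)
    have hdegsplit : G₁.deg E1 + G₂.deg E2 = (k:ℤ) := by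
      have h1 : G₂.deg E2 = (∑ b, E (ι₂ b)) - E (ι₂ P₂) := by
        rw [Multigraph.deg]
        rw [show (∑ b, E2 b) = ∑ b, (E (ι₂ b) - if b = P₂ then E (ι₂ P₂) else 0) from
          Finset.sum_congr rfl fun b _ => by
            rw [hE2def]
            simp only
            by_cases hb : b = P₂
            · subst hb; simp
            · rw [if_neg hb, if_neg hb, sub_zero]]
        rw [Finset.sum_sub_distrib, Finset.sum_ite_eq' Finset.univ P₂ (fun _ => E (ι₂ P₂))]
        simp
      have h2 : G.deg E = G₁.deg E1 + ((∑ b, E (ι₂ b)) - E (ι₂ P₂)) := by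
        rw [Multigraph.deg, glue_sum_split inj1 inj2 hP1 hP2 hcap hcup E]
        rfl
      rw [h1, ← hdeg, h2]
    have hd1 : (0:ℤ) ≤ G₁.deg E1 := G₁.effective_deg_nonneg hE1eff
    have hd2 : (0:ℤ) ≤ G₂.deg E2 := G₂.effective_deg_nonneg hE2eff
    set k₁ := (G₁.deg E1).toNat with hk1def
    set k₂ := (G₂.deg E2).toNat with hk2def
    have hk1 : G₁.deg E1 = (k₁:ℤ) := by rw [hk1def, Int.toNat_of_nonneg hd1]
    have hk2 : G₂.deg E2 = (k₂:ℤ) := by rw [hk2def, Int.toNat_of_nonneg hd2]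
    have hk12 : k₁ + k₂ = k := by
      have : ((k₁ + k₂ : ℕ) : ℤ) = (k:ℤ) := by push_cast; rw [← hk1, ← hk2]; exact hdegsplit
      exact_mod_cast this
    have hm := hK k₁ k₂ hk12
    have hm1 : G₁.lam P₁ k₁ ∈ G₁.NN P₁ k₁ := (G₁.mem_NN_iff_lam_le P₁ k₁ _).mpr le_rfl
    have hm2 : G₂.lam P₂ k₂ ∈ G₂.NN P₂ k₂ := (G₂.mem_NN_iff_lam_le P₂ k₂ _).mpr le_rfl
    obtain ⟨f₁, hf₁⟩ := hm1 E1 hE1eff hk1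
    obtain ⟨f₂, hf₂⟩ := hm2 E2 hE2eff hk2
    set c : ℤ := f₂ P₂ - f₁ P₁ with hcdef
    set f : G.V → ℤ :=
      Function.extend ι₁ (fun a => f₁ a + c) (Function.extend ι₂ f₂ (fun _ => 0))
      with hfdef
    have hfι1 : ∀ a, f (ι₁ a) = f₁ a + c := fun a => by
      rw [hfdef]; exact inj1.extend_apply _ _ _
    have hfι2 : ∀ b, f (ι₂ b) = f₂ b := by
      intro b
      by_cases hb : b = P₂
      · subst hb
        rw [hP2, ← hP1, hfι1, hcdef]; ring
      · have hnr : ¬ ∃ a, ι₁ a = ι₂ b := by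
          rintro ⟨a, ha⟩
          exact hne2 b hb (ha ▸ hcap a b ha)
        rw [hfdef, Function.extend_apply' _ _ _ hnr]
        exact inj2.extend_apply _ _ _
    have hcomp1 : f ∘ ι₁ = fun a => f₁ a + c := funext hfι1
    have hcomp2 : f ∘ ι₂ = f₂ := funext hfι2
    refine ⟨f, fun v => ?_⟩
    by_cases hv : v = P
    · subst hv
      simp only [Pi.sub_apply, Multigraph.pt_self]
      rw [glue_lap_P inj1 inj2 hP1 hP2 hcap hcup hA1 hA2, hcomp1, hcomp2,
        G₁.lap_add_const]
      have h1 := hf₁ P₁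
      have h2 := hf₂ P₂
      simp only [Pi.sub_apply, Multigraph.pt_self] at h1 h2
      have hEP1 : E1 P₁ = E (ι₁ P₁) := rfl
      rw [hP1] at hEP1
      have hEP2 : E2 P₂ = 0 := by rw [hE2def]; simp
      rw [hEP1] at h1
      rw [hEP2] at h2
      have hmz : ((G₁.lam P₁ k₁ : ℤ) + (G₂.lam P₂ k₂ : ℤ)) ≤ (n:ℤ) := by
        exact_mod_cast hm
      linarith
    · rcases hcup v with ⟨a, rfl⟩ | ⟨b, rfl⟩
      · have ha : a ≠ P₁ := fun hc => hv (hc ▸ hP1)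
        simp only [Pi.sub_apply, Multigraph.pt_ne _ _ _ hv]
        rw [glue_lap₁ inj1 inj2 hP1 hP2 hcap hcup hA1 hA12 f ha, hcomp1,
          G₁.lap_add_const]
        have h1 := hf₁ a
        simp only [Pi.sub_apply, Multigraph.pt_ne _ _ _ ha] at h1
        rw [hE1def] at h1
        simp only at h1
        linarith
      · have hb : b ≠ P₂ := fun hc => hv (hc ▸ hP2)
        simp only [Pi.sub_apply, Multigraph.pt_ne _ _ _ hv]
        rw [glue_lap₂ inj1 inj2 hP1 hP2 hcap hcup hA2 hA12 f hb, hcomp2]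
        have h2 := hf₂ b
        simp only [Pi.sub_apply, Multigraph.pt_ne _ _ _ hb] at h2
        rw [hE2def] at h2
        simp only [if_neg hb] at h2
        linarith
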